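/- Let w > 0, ν ≥ 1, and k ∈ ℝ³ with k ≠ 0. Let ψ̂ : [η₁,∞) → ℝ be a solution of ψ̂'' = −w|k|²ψ̂ + (ν² − 1/4)η^{−2}ψ̂. Then there exist constants W̄ ≥ 0 and η̄ such that ψ̂(η) = W̄·cos(√w·|k|·(η − η̄)) + O(η^{−1}) as η → ∞. -/

import Mathlib

open Filter Topology


lemma decay_aux {t₀ C M : ℝ} (ht₀ : 0 < t₀) (hC : 0 ≤ C)
    {f f' : ℝ → ℝ}
    (hf : ∀ η ≥ t₀, HasDerivAt f (f' η) η)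
    (hf' : ∀ η ≥ t₀, |f' η| ≤ C * (η ^ 2)⁻¹)
    (hM : ∀ η ≥ t₀, |f η| ≤ M) :
    ∃ L : ℝ, ∀ η ≥ t₀, |f η - L| ≤ C * η⁻¹ := by
  -- g₁ = f + C/η is antitone on [t₀, ∞), g₂ = f - C/η is monotone
  set g₁ : ℝ → ℝ := fun η => f η + C * η⁻¹ with hg₁def
  set g₂ : ℝ → ℝ := fun η => f η - C * η⁻¹ with hg₂def
  have hne : ∀ η : ℝ, η ≥ t₀ → η ≠ 0 := fun η hη => (lt_of_lt_of_le ht₀ hη).ne'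
  have hg₁d : ∀ η ≥ t₀, HasDerivAt g₁ (f' η + C * (-(η ^ 2)⁻¹)) η := fun η hη =>
    (hf η hη).add ((hasDerivAt_inv (hne η hη)).const_mul C)
  have hg₂d : ∀ η ≥ t₀, HasDerivAt g₂ (f' η - C * (-(η ^ 2)⁻¹)) η := fun η hη =>
    (hf η hη).sub ((hasDerivAt_inv (hne η hη)).const_mul C)
  have hanti : AntitoneOn g₁ (Set.Ici t₀) := by
    apply antitoneOn_of_deriv_nonpos (convex_Ici t₀)
    · exact fun η hη => (hg₁d η hη).differentiableAt.continuousAt.continuousWithinAt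
    · rw [interior_Ici]
      exact fun η hη => (hg₁d η (le_of_lt hη)).differentiableAt.differentiableWithinAt
    · rw [interior_Ici]
      intro η hη
      rw [(hg₁d η (le_of_lt hη)).deriv]
      have := (abs_le.1 (hf' η (le_of_lt hη))).2
      linarith
  have hmono : MonotoneOn g₂ (Set.Ici t₀) := by
    apply monotoneOn_of_deriv_nonneg (convex_Ici t₀)
    · exact fun η hη => (hg₂d η hη).differentiableAt.continuousAt.continuousWithinAt
    · rw [interior_Ici]
      exact fun η hη => (hg₂d η (le_of_lt hη)).differentiableAt.differentiableWithinAt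
    · rw [interior_Ici]
      intro η hη
      rw [(hg₂d η (le_of_lt hη)).deriv]
      have := (abs_le.1 (hf' η (le_of_lt hη))).1
      linarith
  set A : ℝ → ℝ := fun η => g₁ (max η t₀) with hAdef
  set B : ℝ → ℝ := fun η => g₂ (max η t₀) with hBdef
  have hAanti : Antitone A := fun x y hxy =>
    hanti (Set.mem_Ici.2 (le_max_right x t₀)) (Set.mem_Ici.2 (le_max_right y t₀))
      (max_le_max hxy le_rfl)
  have hBmono : Monotone B := fun x y hxy =>
    hmono (Set.mem_Ici.2 (le_max_right x t₀)) (Set.mem_Ici.2 (le_max_right y t₀))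
      (max_le_max hxy le_rfl)
  have hmaxpos : ∀ η : ℝ, 0 < max η t₀ := fun η => lt_of_lt_of_le ht₀ (le_max_right η t₀)
  have hAbdd : BddBelow (Set.range A) := by
    refine ⟨-M, ?_⟩
    rintro x ⟨η, rfl⟩
    have h1 := (abs_le.1 (hM (max η t₀) (le_max_right η t₀))).1
    have h2 : 0 ≤ C * (max η t₀)⁻¹ := mul_nonneg hC (inv_nonneg.2 (hmaxpos η).le)
    simp only [hAdef, hg₁def]
    linarith
  have hBbdd : BddAbove (Set.range B) := by
    refine ⟨M, ?_⟩
    rintro x ⟨η, rfl⟩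
    have h1 := (abs_le.1 (hM (max η t₀) (le_max_right η t₀))).2
    have h2 : 0 ≤ C * (max η t₀)⁻¹ := mul_nonneg hC (inv_nonneg.2 (hmaxpos η).le)
    simp only [hBdef, hg₂def]
    linarith
  set L : ℝ := ⨅ η, A η with hLdef
  have hAt : Tendsto A atTop (𝓝 L) := tendsto_atTop_ciInf hAanti hAbdd
  have h0 : Tendsto (fun η : ℝ => C * (max η t₀)⁻¹) atTop (𝓝 0) := by
    have h1 : Tendsto (fun η : ℝ => max η t₀) atTop atTop :=
      tendsto_atTop_mono (fun η => le_max_left η t₀) tendsto_id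
    have := (tendsto_inv_atTop_zero.comp h1).const_mul C
    simpa using this
  have hBt : Tendsto B atTop (𝓝 L) := by
    have hBA : B = fun η => A η - 2 * (C * (max η t₀)⁻¹) := by
      funext η
      simp only [hBdef, hAdef, hg₁def, hg₂def]
      ring
    rw [hBA]
    simpa using hAt.sub (h0.const_mul 2)
  have hsup : (⨆ η, B η) = L :=
    tendsto_nhds_unique (tendsto_atTop_ciSup hBmono hBbdd) hBt
  refine ⟨L, fun η hη => ?_⟩
  have hmx : max η t₀ = η := max_eq_left hη
  have h1 : L ≤ f η + C * η⁻¹ := by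
    have := ciInf_le hAbdd η
    rw [hLdef] at *
    simpa [hAdef, hg₁def, hmx] using this
  have h2 : f η - C * η⁻¹ ≤ L := by
    have := le_ciSup hBbdd η
    rw [hsup] at this
    simpa [hBdef, hg₂def, hmx] using this
  rw [abs_le]
  constructor <;> linarith

set_option maxHeartbeats 1000000 in
/-- Asymptotics of solutions of the mode equation
`ψ̂'' = -w|k|²ψ̂ + (ν² - 1/4)η^{-2}ψ̂`: every solution satisfies
`ψ̂(η) = W̄ cos(√w |k| (η - η̄)) + O(η^{-1})` as `η → ∞`. -/
theorem stmt_10 (w ν η₁ : ℝ) (hw : 0 < w) (hν : 1 ≤ ν) (hη₁ : 0 < η₁)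
    (k : EuclideanSpace ℝ (Fin 3)) (hk : k ≠ 0)
    (ψ : ℝ → ℝ) (hψ : ContDiffOn ℝ 2 ψ (Set.Ici η₁))
    (heq : ∀ η ≥ η₁, deriv (deriv ψ) η
        = -w * ‖k‖ ^ 2 * ψ η + (ν ^ 2 - 1 / 4) * η ^ (-2 : ℤ) * ψ η) :
    ∃ Wbar ηbar : ℝ, 0 ≤ Wbar ∧
      (fun η => ψ η - Wbar * Real.cos (Real.sqrt w * ‖k‖ * (η - ηbar)))
        =O[atTop] (fun η => η⁻¹) := by
  have hk0 : (0:ℝ) < ‖k‖ := norm_pos_iff.mpr hk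
  set ω := Real.sqrt w * ‖k‖ with hωdef
  have hω : 0 < ω := mul_pos (Real.sqrt_pos.mpr hw) hk0
  have hω2 : ω ^ 2 = w * ‖k‖ ^ 2 := by
    rw [hωdef, mul_pow, Real.sq_sqrt hw.le]
  set P : ℝ := ν ^ 2 - 1 / 4 with hPdef
  have hP : 0 < P := by rw [hPdef]; nlinarith
  set v := deriv ψ with hvdef
  -- basic derivative facts on (η₁, ∞)
  have hψd : ∀ η ∈ Set.Ioi η₁, HasDerivAt ψ (v η) η := fun η hη =>
    (((hψ.mono Set.Ioi_subset_Ici_self).contDiffAt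
      (isOpen_Ioi.mem_nhds hη)).differentiableAt (by norm_num)).hasDerivAt
  have hvc : ContDiffOn ℝ 1 v (Set.Ioi η₁) :=
    (hψ.mono Set.Ioi_subset_Ici_self).deriv_of_isOpen isOpen_Ioi (by norm_num)
  have hvd : ∀ η ∈ Set.Ioi η₁, HasDerivAt v (-(ω^2) * ψ η + P / η^2 * ψ η) η := by
    intro η hη
    have hη0 : η ≠ 0 := (lt_trans hη₁ hη).ne'
    have h1 : DifferentiableAt ℝ v η :=
      (hvc.contDiffAt (isOpen_Ioi.mem_nhds hη)).differentiableAt (by norm_num)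
    have h2 := h1.hasDerivAt
    have h3 : deriv v η = -(ω^2) * ψ η + P / η^2 * ψ η := by
      rw [hvdef, heq η (le_of_lt hη), hω2]
      have h4 : (η:ℝ) ^ (-2:ℤ) = (η^2)⁻¹ := by
        rw [zpow_neg]; norm_cast
      rw [h4]
      ring
    rw [h3] at h2
    exact h2
  set t₀ : ℝ := η₁ + 1 with ht₀def
  have hη₁t₀ : η₁ < t₀ := by rw [ht₀def]; linarith
  have ht₀ : (0:ℝ) < t₀ := by rw [ht₀def]; linarith
  -- the energy F and the Gronwall factor
  set F : ℝ → ℝ := fun η => ψ η ^ 2 + (v η / ω) ^ 2 with hFdef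
  set dF : ℝ → ℝ := fun η => 2 * (P / η^2) * ψ η * v η / ω^2 with hdFdef
  have hFd : ∀ η ∈ Set.Ioi η₁, HasDerivAt F (dF η) η := by
    intro η hη
    have hη0 : η ≠ 0 := (lt_trans hη₁ hη).ne'
    have h1 := ((hψd η hη).fun_pow 2).fun_add (((hvd η hη).div_const ω).fun_pow 2)
    refine h1.congr_deriv ?_
    simp only [hdFdef]
    have hω0 : ω ≠ 0 := hω.ne'
    push_cast
    field_simp
    ring
  set G : ℝ → ℝ := fun η => F η * Real.exp (P / (ω * η)) with hGdef
  have hGd : ∀ η ∈ Set.Ioi η₁, HasDerivAt G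
      (dF η * Real.exp (P / (ω * η)) +
        F η * (Real.exp (P / (ω * η)) * ((0 * (ω * η) - P * (ω * 1)) / (ω * η)^2))) η := by
    intro η hη
    have hη0 : η ≠ 0 := (lt_trans hη₁ hη).ne'
    have hinner : HasDerivAt (fun η : ℝ => P / (ω * η))
        ((0 * (ω * η) - P * (ω * 1)) / (ω * η)^2) η :=
      (hasDerivAt_const η P).div ((hasDerivAt_id η).const_mul ω) (mul_ne_zero hω.ne' hη0)
    exact (hFd η hη).mul hinner.exp
  have hGanti : AntitoneOn G (Set.Ici t₀) := by
    apply antitoneOn_of_deriv_nonpos (convex_Ici t₀)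
    · exact fun η hη =>
        (hGd η (lt_of_lt_of_le hη₁t₀ hη)).differentiableAt.continuousAt.continuousWithinAt
    · rw [interior_Ici]
      exact fun η hη =>
        (hGd η (lt_trans hη₁t₀ hη)).differentiableAt.differentiableWithinAt
    · rw [interior_Ici]
      intro η hη
      have hη₁' : η ∈ Set.Ioi η₁ := lt_trans hη₁t₀ hη
      have hηpos : (0:ℝ) < η := lt_trans ht₀ hη
      rw [(hGd η hη₁').deriv]
      have hE : (0:ℝ) < Real.exp (P / (ω * η)) := Real.exp_pos _
      have h2 : ((0 * (ω * η) - P * (ω * 1)) / (ω * η)^2) = -(P / (ω * η^2)) := by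
        field_simp
        ring
      rw [h2]
      have h1 : 2 * ψ η * (v η / ω) ≤ ψ η ^ 2 + (v η / ω) ^ 2 := by
        nlinarith [sq_nonneg (ψ η - v η / ω)]
      have hkey : dF η ≤ (P / (ω * η^2)) * F η := by
        have h3 : dF η = (P / (ω * η^2)) * (2 * ψ η * (v η / ω)) := by
          simp only [hdFdef]
          field_simp
        rw [h3]
        exact mul_le_mul_of_nonneg_left h1 (by positivity)
      have h4 : dF η * Real.exp (P/(ω*η)) + F η * (Real.exp (P/(ω*η)) * -(P/(ω*η^2)))
          = Real.exp (P/(ω*η)) * (dF η - (P/(ω*η^2)) * F η) := by ring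
      rw [h4]
      exact mul_nonpos_of_nonneg_of_nonpos hE.le (by linarith)
  set M2 : ℝ := F t₀ * Real.exp (P / (ω * t₀)) with hM2def
  have hFnonneg : ∀ η, 0 ≤ F η := fun η => by positivity
  have hFle : ∀ η ≥ t₀, F η ≤ M2 := by
    intro η hη
    have hηpos : (0:ℝ) < η := lt_of_lt_of_le ht₀ hη
    have h1 : G η ≤ G t₀ := hGanti (Set.self_mem_Ici) (Set.mem_Ici.2 hη) hη
    have h2 : F η ≤ F η * Real.exp (P / (ω * η)) :=
      le_mul_of_one_le_right (hFnonneg η)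
        (Real.one_le_exp (div_nonneg hP.le (mul_nonneg hω.le hηpos.le)))
    exact h2.trans h1
  set M : ℝ := Real.sqrt M2 with hMdef
  have hM2nonneg : 0 ≤ M2 := (hFnonneg t₀).trans (hFle t₀ le_rfl)
  have hsq_le : ∀ x : ℝ, ∀ η ≥ t₀, x^2 ≤ F η → |x| ≤ M := by
    intro x η hη hx
    rw [hMdef, ← Real.sqrt_sq_eq_abs]
    exact Real.sqrt_le_sqrt (hx.trans (hFle η hη))
  have hψM : ∀ η ≥ t₀, |ψ η| ≤ M := fun η hη =>
    hsq_le (ψ η) η hη (by simp only [hFdef]; nlinarith [sq_nonneg (v η / ω)])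
  -- rotating frame coordinates
  set a : ℝ → ℝ := fun η => ψ η * Real.cos (ω*η) - (v η / ω) * Real.sin (ω*η) with hadef
  set b : ℝ → ℝ := fun η => ψ η * Real.sin (ω*η) + (v η / ω) * Real.cos (ω*η) with hbdef
  set da : ℝ → ℝ := fun η => (-(P / η^2) * ψ η / ω) * Real.sin (ω*η) with hdadef
  set db : ℝ → ℝ := fun η => ((P / η^2) * ψ η / ω) * Real.cos (ω*η) with hdbdef
  have hcs : ∀ η : ℝ, Real.sin (ω*η)^2 + Real.cos (ω*η)^2 = 1 := fun η =>
    Real.sin_sq_add_cos_sq (ω*η)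
  have hcosd : ∀ η : ℝ, HasDerivAt (fun η : ℝ => Real.cos (ω*η)) (-Real.sin (ω*η) * ω) η := by
    intro η
    have := ((hasDerivAt_id η).const_mul ω).cos
    simpa using this
  have hsind : ∀ η : ℝ, HasDerivAt (fun η : ℝ => Real.sin (ω*η)) (Real.cos (ω*η) * ω) η := by
    intro η
    have := ((hasDerivAt_id η).const_mul ω).sin
    simpa using this
  have had : ∀ η ≥ t₀, HasDerivAt a (da η) η := by
    intro η hη
    have hη' : η ∈ Set.Ioi η₁ := lt_of_lt_of_le hη₁t₀ hη
    have hη0 : η ≠ 0 := (lt_of_lt_of_le ht₀ hη).ne'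
    have h1 := ((hψd η hη').fun_mul (hcosd η)).fun_sub (((hvd η hη').div_const ω).fun_mul (hsind η))
    refine h1.congr_deriv ?_
    simp only [hdadef]
    have hω0 : ω ≠ 0 := hω.ne'
    push_cast
    field_simp
    ring
  have hbd : ∀ η ≥ t₀, HasDerivAt b (db η) η := by
    intro η hη
    have hη' : η ∈ Set.Ioi η₁ := lt_of_lt_of_le hη₁t₀ hη
    have hη0 : η ≠ 0 := (lt_of_lt_of_le ht₀ hη).ne'
    have h1 := ((hψd η hη').fun_mul (hsind η)).fun_add (((hvd η hη').div_const ω).fun_mul (hcosd η))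
    refine h1.congr_deriv ?_
    simp only [hdbdef]
    have hω0 : ω ≠ 0 := hω.ne'
    push_cast
    field_simp
    ring
  set C : ℝ := P * M / ω with hCdef
  have hMnonneg : 0 ≤ M := Real.sqrt_nonneg _
  have hC : 0 ≤ C := by positivity
  have habs_aux : ∀ η ≥ t₀, ∀ y : ℝ, |y| ≤ 1 → |(P / η^2) * ψ η / ω * y| ≤ C * (η^2)⁻¹ := by
    intro η hη y hy
    have hηpos : (0:ℝ) < η := lt_of_lt_of_le ht₀ hη
    have h1 : |(P / η^2) * ψ η / ω * y| = P / η^2 * |ψ η| / ω * |y| := by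
      rw [abs_mul, abs_div, abs_mul, abs_of_pos (by positivity : (0:ℝ) < P / η^2),
        abs_of_pos hω]
    rw [h1]
    have h2 : C * (η^2)⁻¹ = P / η^2 * M / ω * 1 := by
      rw [hCdef]; ring
    rw [h2]
    gcongr
    exact hψM η hη
  have hda_le : ∀ η ≥ t₀, |da η| ≤ C * (η^2)⁻¹ := by
    intro η hη
    have h1 : da η = -((P / η^2) * ψ η / ω * Real.sin (ω*η)) := by
      simp only [hdadef]; ring
    rw [h1, abs_neg]
    exact habs_aux η hη _ (abs_le.2 ⟨Real.neg_one_le_sin _, Real.sin_le_one _⟩)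
  have hdb_le : ∀ η ≥ t₀, |db η| ≤ C * (η^2)⁻¹ := by
    intro η hη
    exact habs_aux η hη _ (abs_le.2 ⟨Real.neg_one_le_cos _, Real.cos_le_one _⟩)
  have haM : ∀ η ≥ t₀, |a η| ≤ M := by
    intro η hη
    refine hsq_le (a η) η hη ?_
    have := hcs η
    simp only [hadef, hFdef]
    nlinarith [sq_nonneg (ψ η * Real.sin (ω*η) + (v η / ω) * Real.cos (ω*η))]
  have hbM : ∀ η ≥ t₀, |b η| ≤ M := by
    intro η hη
    refine hsq_le (b η) η hη ?_
    have := hcs η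
    simp only [hbdef, hFdef]
    nlinarith [sq_nonneg (ψ η * Real.cos (ω*η) - (v η / ω) * Real.sin (ω*η))]
  obtain ⟨aL, haL⟩ := decay_aux ht₀ hC had hda_le haM
  obtain ⟨bL, hbL⟩ := decay_aux ht₀ hC hbd hdb_le hbM
  -- reconstruct ψ
  have hid : ∀ η, ψ η = a η * Real.cos (ω*η) + b η * Real.sin (ω*η) := by
    intro η
    simp only [hadef, hbdef]
    linear_combination (-(ψ η)) * (hcs η)
  -- the limit amplitude and phase
  set z : ℂ := (aL:ℂ) + (bL:ℂ) * Complex.I with hzdef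
  refine ⟨‖z‖, Complex.arg z / ω, norm_nonneg z, ?_⟩
  have hkey : ∀ η : ℝ, ‖z‖ * Real.cos (ω * (η - Complex.arg z / ω))
      = aL * Real.cos (ω*η) + bL * Real.sin (ω*η) := by
    intro η
    have h1 : ω * (η - Complex.arg z / ω) = ω*η - Complex.arg z := by
      field_simp
    rw [h1, Real.cos_sub]
    by_cases hz : z = 0
    · have h2 : aL = 0 ∧ bL = 0 := by
        rw [hzdef, Complex.ext_iff] at hz
        simpa using hz
      rw [hz, h2.1, h2.2]
      simp
    · have habs : ‖z‖ ≠ 0 := by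
        simp [map_ne_zero, hz]
      rw [Complex.cos_arg hz, Complex.sin_arg]
      have hre : z.re = aL := by simp [hzdef]
      have him : z.im = bL := by simp [hzdef]
      rw [hre, him]
      field_simp
  rw [Asymptotics.isBigO_iff]
  refine ⟨2 * C, ?_⟩
  filter_upwards [eventually_ge_atTop t₀] with η hη
  have hηpos : (0:ℝ) < η := lt_of_lt_of_le ht₀ hη
  have h1 : ψ η - ‖z‖ * Real.cos (ω * (η - Complex.arg z / ω))
      = (a η - aL) * Real.cos (ω*η) + (b η - bL) * Real.sin (ω*η) := by
    rw [hid η, hkey η]; ring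
  rw [Real.norm_eq_abs, Real.norm_eq_abs, h1]
  calc |(a η - aL) * Real.cos (ω*η) + (b η - bL) * Real.sin (ω*η)|
      ≤ |(a η - aL) * Real.cos (ω*η)| + |(b η - bL) * Real.sin (ω*η)| := abs_add_le _ _
    _ ≤ |a η - aL| * 1 + |b η - bL| * 1 := by
        rw [abs_mul, abs_mul]
        gcongr
        · exact Real.abs_cos_le_one _
        · exact Real.abs_sin_le_one _
    _ ≤ C * η⁻¹ * 1 + C * η⁻¹ * 1 := by
        gcongr
        · exact haL η hη
        · exact hbL η hη
    _ ≤ 2 * C * |η⁻¹| := by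
        rw [abs_of_pos (inv_pos.2 hηpos)]
        linarith
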